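/- arXiv:1709.08308 — 7 statements merged into one kernel-verified Lean document; each statement's English description precedes it below -/
import Mathlib

section
/- Let θ, δ > 0, let e₀ ≤ 2δ/θ², and define e_{t+1}(η₀,…,η_t) = (1 - θη_t) e_t(η₀,…,η_{t-1}) + δη_t². Define the self-tuned sequence η₀* = (θ/(2δ)) e₀ and η_t* = η_{t-1}*(1 - (θ/2)η_{t-1}*). Then e_t evaluated at (η₀*,…,η_{t-1}*) equals (2δ/θ) η_t* for all t ≥ 0. -/
theorem selftuned_error_eq (θ δ e₀ : ℝ) (hθ : 0 < θ) (hδ : 0 < δ)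
    (he₀ : 0 ≤ e₀) (he₀' : e₀ ≤ 2 * δ / θ ^ 2)
    (ηs : ℕ → ℝ) (hη0 : ηs 0 = θ / (2 * δ) * e₀)
    (hηrec : ∀ t, ηs (t + 1) = ηs t * (1 - θ / 2 * ηs t))
    (es : ℕ → ℝ) (hes0 : es 0 = e₀)
    (hesrec : ∀ t, es (t + 1) = (1 - θ * ηs t) * es t + δ * (ηs t) ^ 2) :
    ∀ t, es t = 2 * δ / θ * ηs t := by
  intro t
  induction t with
  | zero =>
    rw [hes0, hη0]
    field_simp
  | succ t ih =>
    rw [hesrec, hηrec, ih]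
    field_simp
    ring
end

section
/- Let θ, δ > 0, e₀ ≤ 2δ/θ², and define e_{t+1}(η₀,…,η_t) = (1 - θη_t)e_t + δη_t² with self-tuned stepsizes η₀* = (θ/(2δ))e₀, η_t* = η_{t-1}*(1 - (θ/2)η_{t-1}*). Then for every t ≥ 1 and every vector (η₀,…,η_{t-1}) with 0 < η_j ≤ 1/θ for all j, we have e_t(η₀,…,η_{t-1}) - e_t(η₀*,…,η_{t-1}*) ≥ δ(η_{t-1} - η_{t-1}*)², so the self-tuned stepsizes minimize e_t over (0,1/θ]^t. -/
theorem selftuned_minimizes_error (θ δ e₀ : ℝ) (hθ : 0 < θ) (hδ : 0 < δ)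
    (he₀ : 0 ≤ e₀) (he₀' : e₀ ≤ 2 * δ / θ ^ 2)
    (e : (ℕ → ℝ) → ℕ → ℝ)
    (he0 : ∀ η : ℕ → ℝ, e η 0 = e₀)
    (herec : ∀ (η : ℕ → ℝ) (t : ℕ),
      e η (t + 1) = (1 - θ * η t) * e η t + δ * (η t) ^ 2)
    (ηs : ℕ → ℝ) (hη0 : ηs 0 = θ / (2 * δ) * e₀)
    (hηrec : ∀ t, ηs (t + 1) = ηs t * (1 - θ / 2 * ηs t)) :
    ∀ (t : ℕ) (η : ℕ → ℝ), (∀ j ≤ t, 0 < η j ∧ η j ≤ 1 / θ) →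
      e η (t + 1) - e ηs (t + 1) ≥ δ * (η t - ηs t) ^ 2 := by
  have hθ' : θ ≠ 0 := ne_of_gt hθ
  have hδ' : δ ≠ 0 := ne_of_gt hδ
  -- Invariant: θ * e* t = 2δ * ηs t
  have hA : ∀ t, θ * e ηs t = 2 * δ * ηs t := by
    intro t
    induction t with
    | zero => rw [he0, hη0]; field_simp
    | succ t ih =>
      rw [herec, hηrec]
      linear_combination (1 - θ * ηs t) * ih
  -- Monotonicity: e η t ≥ e ηs t for admissible η
  have hB : ∀ t (η : ℕ → ℝ), (∀ j < t, 0 < η j ∧ η j ≤ 1 / θ) → e ηs t ≤ e η t := by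
    intro t
    induction t with
    | zero => intro η _; rw [he0, he0]
    | succ t ih =>
      intro η hη
      have h1 := ih η (fun j hj => hη j (Nat.lt_succ_of_lt hj))
      have h2 := hη t (Nat.lt_succ_self t)
      have hle : θ * η t ≤ 1 := by
        have := h2.2
        rw [le_div_iff₀ hθ] at this
        linarith
      rw [herec, herec]
      have key : (1 - θ * η t) * e η t + δ * η t ^ 2
          - ((1 - θ * ηs t) * e ηs t + δ * ηs t ^ 2)
          = (1 - θ * η t) * (e η t - e ηs t) + δ * (η t - ηs t) ^ 2 := by
        linear_combination (ηs t - η t) * hA t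
      nlinarith [mul_nonneg (by linarith : (0:ℝ) ≤ 1 - θ * η t) (by linarith : (0:ℝ) ≤ e η t - e ηs t),
        sq_nonneg (η t - ηs t)]
  intro t η hη
  have h1 := hB t η (fun j hj => hη j (Nat.le_of_lt_succ (Nat.lt_succ_of_lt hj)))
  have h2 := hη t (Nat.le_refl t)
  have hle : θ * η t ≤ 1 := by
    have := h2.2
    rw [le_div_iff₀ hθ] at this
    linarith
  rw [herec, herec]
  have key : (1 - θ * η t) * e η t + δ * η t ^ 2
      - ((1 - θ * ηs t) * e ηs t + δ * ηs t ^ 2)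
      = (1 - θ * η t) * (e η t - e ηs t) + δ * (η t - ηs t) ^ 2 := by
    linear_combination (ηs t - η t) * hA t
  nlinarith [mul_nonneg (by linarith : (0:ℝ) ≤ 1 - θ * η t) (by linarith : (0:ℝ) ≤ e η t - e ηs t)]
end

section
/- Let θ > 0 and let the sequence {η_t} satisfy 0 < η₀ ≤ 1/θ and η_{t+1} = η_t(1 - (θ/2)η_t). Then 0 < η_t ≤ 1/θ for all t, the sequence is non-increasing, and η_t < 2/(θt) for all t ≥ 1. -/
theorem selftuned_stepsize_bounds (θ : ℝ) (hθ : 0 < θ)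
    (η : ℕ → ℝ) (h0 : 0 < η 0) (h0' : η 0 ≤ 1 / θ)
    (hrec : ∀ t, η (t + 1) = η t * (1 - θ / 2 * η t)) :
    (∀ t, 0 < η t ∧ η t ≤ 1 / θ) ∧
      (∀ t, η (t + 1) ≤ η t) ∧
      (∀ t : ℕ, 1 ≤ t → η t < 2 / (θ * t)) := by
  have key : ∀ t, 0 < η t ∧ η t ≤ 1 / θ := by
    intro t
    induction t with
    | zero => exact ⟨h0, h0'⟩
    | succ n ih =>
      obtain ⟨hp, hb⟩ := ih
      have hle : θ / 2 * η n ≤ 1 / 2 := by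
        have := mul_le_mul_of_nonneg_left hb (by positivity : (0:ℝ) ≤ θ / 2)
        calc θ / 2 * η n ≤ θ / 2 * (1 / θ) := this
          _ = 1 / 2 := by field_simp
      have hfac : 0 < 1 - θ / 2 * η n := by linarith
      constructor
      · rw [hrec n]; positivity
      · rw [hrec n]
        have hfac1 : 1 - θ / 2 * η n ≤ 1 := by nlinarith [mul_nonneg (hθ.le) hp.le]
        calc η n * (1 - θ / 2 * η n) ≤ η n * 1 :=
              mul_le_mul_of_nonneg_left hfac1 hp.le
          _ = η n := mul_one _
          _ ≤ 1 / θ := hb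
  have mono : ∀ t, η (t + 1) ≤ η t := by
    intro t
    rw [hrec t]
    obtain ⟨hp, _⟩ := key t
    nlinarith [mul_nonneg hθ.le (sq_nonneg (η t))]
  have inv : ∀ t : ℕ, θ + t * (θ / 2) ≤ 1 / η t := by
    intro t
    induction t with
    | zero =>
      simp only [Nat.cast_zero, zero_mul, add_zero]
      rw [le_div_iff₀ h0]
      calc θ * η 0 ≤ θ * (1 / θ) := mul_le_mul_of_nonneg_left h0' hθ.le
        _ = 1 := by field_simp
    | succ n ih =>
      obtain ⟨hp, hb⟩ := key n
      have hle : θ / 2 * η n ≤ 1 / 2 := by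
        have := mul_le_mul_of_nonneg_left hb (by positivity : (0:ℝ) ≤ θ / 2)
        calc θ / 2 * η n ≤ θ / 2 * (1 / θ) := this
          _ = 1 / 2 := by field_simp
      have hfac : 0 < 1 - θ / 2 * η n := by linarith
      have hstep : 1 / η n + θ / 2 ≤ 1 / η (n + 1) := by
        rw [hrec n]
        rw [div_add' _ _ _ (ne_of_gt hp), div_le_div_iff₀ hp (by positivity)]
        nlinarith [mul_nonneg hp.le (sq_nonneg (θ / 2 * η n))]
      push_cast
      linarith
  refine ⟨key, mono, ?_⟩
  intro t ht
  obtain ⟨hp, _⟩ := key t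
  have h1 := inv t
  have htpos : (0:ℝ) < t := by exact_mod_cast ht
  have h2 : t * (θ / 2) < 1 / η t := by linarith
  have h3 := (lt_div_iff₀ hp).mp h2
  rw [lt_div_iff₀ (by positivity : (0:ℝ) < θ * t)]
  nlinarith
end

section
/- Let θ, δ > 0, e₀ ≤ 2δ/θ², and define e_{t+1} = (1 - θη_t*)e_t + δ(η_t*)² with η₀* = (θ/(2δ))e₀ and η_t* = η_{t-1}*(1 - (θ/2)η_{t-1}*). Then e_t ≤ (4δ/θ²)(1/t) for all t ≥ 1. -/
theorem selftuned_error_rate (θ δ e₀ : ℝ) (hθ : 0 < θ) (hδ : 0 < δ)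
    (he₀ : 0 ≤ e₀) (he₀' : e₀ ≤ 2 * δ / θ ^ 2)
    (ηs : ℕ → ℝ) (hη0 : ηs 0 = θ / (2 * δ) * e₀)
    (hηrec : ∀ t, ηs (t + 1) = ηs t * (1 - θ / 2 * ηs t))
    (es : ℕ → ℝ) (hes0 : es 0 = e₀)
    (hesrec : ∀ t, es (t + 1) = (1 - θ * ηs t) * es t + δ * (ηs t) ^ 2) :
    ∀ t : ℕ, 1 ≤ t → es t ≤ 4 * δ / θ ^ 2 * (1 / t) := by
  have hθ2 : (0:ℝ) < θ ^ 2 := by positivity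
  have he₀'' : e₀ * θ ^ 2 ≤ 2 * δ := by
    rw [div_eq_mul_inv] at he₀'
    nlinarith [mul_le_mul_of_nonneg_right he₀' hθ2.le,
      mul_inv_cancel₀ (ne_of_gt hθ2)]
  have key : ∀ t : ℕ, 0 ≤ ηs t ∧ θ / 2 * ηs t ≤ 1 / (t + 2) ∧
      es t = 2 * δ / θ * ηs t := by
    intro t
    induction t with
    | zero =>
      refine ⟨?_, ?_, ?_⟩
      · rw [hη0]; positivity
      · rw [hη0]
        push_cast
        have heq : θ / 2 * (θ / (2 * δ) * e₀) = θ ^ 2 * e₀ / (4 * δ) := by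
          field_simp; ring
        rw [heq, div_le_div_iff₀ (by positivity) (by norm_num)]
        nlinarith
      · rw [hη0, hes0]; field_simp
    | succ t ih =>
      obtain ⟨h1, h2, h3⟩ := ih
      set a := θ / 2 * ηs t with ha
      have hn : (0:ℝ) ≤ (t:ℝ) := Nat.cast_nonneg t
      have ha0 : 0 ≤ a := by positivity
      have ha1 : a * ((t:ℝ) + 2) ≤ 1 := by
        rw [← le_div_iff₀ (by positivity)]; exact h2
      have ha2 : a ≤ 1 / 2 := by nlinarith
      refine ⟨?_, ?_, ?_⟩
      · rw [hηrec]
        have : 1 - θ / 2 * ηs t ≥ 0 := by rw [← ha]; linarith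
        exact mul_nonneg h1 this
      · rw [hηrec]
        have heq : θ / 2 * (ηs t * (1 - θ / 2 * ηs t)) = a * (1 - a) := by
          rw [ha]; ring
        rw [heq, le_div_iff₀ (by push_cast; positivity)]
        push_cast
        nlinarith [mul_nonneg (mul_nonneg ha0 ha0) hn,
          mul_nonneg (sub_nonneg.2 ha1) (sub_nonneg.2 ha2),
          sq_nonneg a, mul_nonneg ha0 (sub_nonneg.2 ha2)]
      · rw [hesrec, hηrec, h3]
        field_simp
        ring
  intro t ht
  obtain ⟨h1, h2, h3⟩ := key t
  have htR : (1:ℝ) ≤ (t:ℝ) := by exact_mod_cast ht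
  have h2' : θ / 2 * ηs t ≤ 1 / (t:ℝ) := by
    refine h2.trans ?_
    apply one_div_le_one_div_of_le (by linarith)
    linarith
  calc es t = 4 * δ / θ ^ 2 * (θ / 2 * ηs t) := by rw [h3]; field_simp; ring
    _ ≤ 4 * δ / θ ^ 2 * (1 / (t:ℝ)) := by
        apply mul_le_mul_of_nonneg_left h2' (by positivity)
end

section
/- Let θ > 0 and let {η_t} satisfy 0 < η₀ ≤ 1/θ and η_{t+1} = η_t(1 - (θ/2)η_t). Then ∑_{t=0}^∞ η_t = ∞. -/
theorem selftuned_stepsize_not_summable (θ : ℝ) (hθ : 0 < θ)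
    (η : ℕ → ℝ) (h0 : 0 < η 0) (h0' : η 0 ≤ 1 / θ)
    (hrec : ∀ t, η (t + 1) = η t * (1 - θ / 2 * η t)) :
    Filter.Tendsto (fun n => ∑ t ∈ Finset.range n, η t) Filter.atTop Filter.atTop := by
  -- Step 1: 0 < η t ≤ 1/θ for all t
  have hbnd : ∀ t, 0 < η t ∧ η t ≤ 1 / θ := by
    intro t
    induction t with
    | zero => exact ⟨h0, h0'⟩
    | succ t ih =>
      obtain ⟨hp, hle⟩ := ih
      have hx : θ / 2 * η t ≤ 1 / 2 := by
        have := mul_le_mul_of_nonneg_left hle (by positivity : (0:ℝ) ≤ θ / 2)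
        calc θ / 2 * η t ≤ θ / 2 * (1 / θ) := this
          _ = 1 / 2 := by field_simp
      have hx0 : 0 < θ / 2 * η t := by positivity
      constructor
      · rw [hrec t]; nlinarith
      · rw [hrec t]; nlinarith
  -- Step 2: 1/η t ≤ 1/η 0 + θ * t
  have hinv : ∀ t : ℕ, 1 / η t ≤ 1 / η 0 + θ * t := by
    intro t
    induction t with
    | zero => simp
    | succ t ih =>
      obtain ⟨hp, hle⟩ := hbnd t
      obtain ⟨hp', _⟩ := hbnd (t + 1)
      have hx : θ / 2 * η t ≤ 1 / 2 := by
        have := mul_le_mul_of_nonneg_left hle (by positivity : (0:ℝ) ≤ θ / 2)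
        calc θ / 2 * η t ≤ θ / 2 * (1 / θ) := this
          _ = 1 / 2 := by field_simp
      have hcancel : 1 / η t * η t = 1 := by field_simp
      have key : 1 / η (t + 1) ≤ 1 / η t + θ := by
        rw [hrec t]
        rw [div_le_iff₀ (by rw [← hrec t]; exact hp')]
        nlinarith [mul_pos (half_pos hθ) hp]
      push_cast
      linarith
  -- Step 3: η t ≥ c / (t+1) with c = 1/(1/η 0 + θ)
  set c : ℝ := 1 / (1 / η 0 + θ) with hc
  have hcpos : 0 < c := by positivity
  have hlow : ∀ t : ℕ, c * (1 / (t + 1)) ≤ η t := by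
    intro t
    obtain ⟨hp, _⟩ := hbnd t
    have ht : (0:ℝ) ≤ t := Nat.cast_nonneg t
    have hθη : 0 < 1 / η 0 := by positivity
    have h1 : 1 ≤ (1 / η 0 + θ) * (t + 1) * η t := by
      rw [← div_le_iff₀ hp]
      have := hinv t
      nlinarith [mul_nonneg hθη.le ht]
    rw [hc, div_mul_eq_mul_div, one_mul, div_div, div_le_iff₀ (by positivity)]
    nlinarith
  -- Step 4: conclude by comparison with harmonic series
  have hharm := Real.tendsto_sum_range_one_div_nat_succ_atTop
  have hmul : Filter.Tendsto (fun n => c * ∑ i ∈ Finset.range n, (1 : ℝ) / (i + 1))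
      Filter.atTop Filter.atTop := hharm.const_mul_atTop hcpos
  refine Filter.tendsto_atTop_mono (fun n => ?_) hmul
  rw [Finset.mul_sum]
  exact Finset.sum_le_sum fun t _ => hlow t
end

section
/- Let B ⊆ ℝ^n be closed and convex, ω: ℝ^n → ℝ strongly convex with parameter μ_ω, D_ω its Bregman divergence, and let β₊ = argmin_{z ∈ B} {⟨ηg, z⟩ + D_ω(β, z)} for β ∈ B, g ∈ ℝ^n, η > 0. Then for every u ∈ B: D_ω(β₊, u) ≤ D_ω(β, u) + η⟨g, u - β⟩ + (η²/(2μ_ω))‖g‖*², where ‖·‖* is the dual norm. -/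
open RealInnerProductSpace

lemma key_deriv_le {φ ψ : ℝ → ℝ} {c d : ℝ} (hφ : HasDerivAt φ c 0)
    (hψ : Filter.Tendsto ψ (nhdsWithin 0 (Set.Ioi 0)) (nhds d))
    (h : ∀ t ∈ Set.Ioc (0:ℝ) 1, (φ t - φ 0) / t ≤ ψ t) : c ≤ d := by
  have hsub : Set.Ioi (0:ℝ) ⊆ {(0:ℝ)}ᶜ := fun x hx => ne_of_gt hx
  have hs : Filter.Tendsto (fun t => (φ t - φ 0) / t) (nhdsWithin 0 (Set.Ioi 0)) (nhds c) := by
    have h2 := (hasDerivAt_iff_tendsto_slope.mp hφ).mono_left (nhdsWithin_mono 0 hsub)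
    refine h2.congr fun t => ?_
    simp [slope_def_field, div_eq_div_iff]
  refine le_of_tendsto_of_tendsto hs hψ ?_
  filter_upwards [Ioc_mem_nhdsGT_of_mem (Set.mem_Ico.mpr ⟨le_refl (0:ℝ), one_pos⟩)] with t ht
  exact h t ht

lemma hasDerivAt_line {n : ℕ} (f : EuclideanSpace ℝ (Fin n) → ℝ)
    (p x d : EuclideanSpace ℝ (Fin n)) (hf : HasGradientAt f p x) :
    HasDerivAt (fun t : ℝ => f (x + t • d)) ⟪p, d⟫ 0 := by
  have hL : HasDerivAt (fun t : ℝ => x + t • d) d 0 := by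
    simpa using ((hasDerivAt_id (0:ℝ)).smul_const d).const_add x
  have hF := hasGradientAt_iff_hasFDerivAt.mp hf
  have hx0 : x + (0:ℝ) • d = x := by simp
  have := (hx0 ▸ hF : HasFDerivAt f _ (x + (0:ℝ) • d)).comp_hasDerivAt 0 hL
  simpa [Function.comp_def, InnerProductSpace.toDual_apply_apply] using this

lemma strong_grad_ineq {n : ℕ} {ω : EuclideanSpace ℝ (Fin n) → ℝ} (hω : ContDiff ℝ 1 ω)
    {μω : ℝ} (hsc : StrongConvexOn Set.univ μω ω) (x y : EuclideanSpace ℝ (Fin n)) :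
    ω x + ⟪gradient ω x, y - x⟫ + μω / 2 * ‖y - x‖ ^ 2 ≤ ω y := by
  have hgrad : HasGradientAt ω (gradient ω x) x :=
    (hω.differentiable one_ne_zero x).hasGradientAt
  have hφ := hasDerivAt_line ω (gradient ω x) x (y - x) hgrad
  have key : ⟪gradient ω x, y - x⟫ ≤ ω y - ω x - μω / 2 * ‖x - y‖ ^ 2 := by
    refine key_deriv_le hφ (ψ := fun t => ω y - ω x - (1 - t) * (μω / 2 * ‖x - y‖ ^ 2)) ?_ ?_
    · have hc : Continuous fun t : ℝ => ω y - ω x - (1 - t) * (μω / 2 * ‖x - y‖ ^ 2) := by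
        continuity
      have h := (hc.tendsto 0).mono_left (nhdsWithin_le_nhds (s := Set.Ioi (0:ℝ)))
      simpa using h
    · intro t ht
      have hcvx := hsc.2 (Set.mem_univ x) (Set.mem_univ y)
        (by linarith [ht.2] : (0:ℝ) ≤ 1 - t) (le_of_lt ht.1) (by ring)
      have hpt : (1 - t) • x + t • y = x + t • (y - x) := by module
      rw [hpt] at hcvx
      have h0 : x + (0:ℝ) • (y - x) = x := by simp
      rw [div_le_iff₀ ht.1]
      simp only [smul_eq_mul] at hcvx
      rw [h0]
      nlinarith [hcvx]
  have hn : ‖x - y‖ = ‖y - x‖ := norm_sub_rev x y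
  rw [hn] at key
  linarith

/-- Bregman divergence of `ω`. -/
noncomputable def bregman {n : ℕ} (ω : EuclideanSpace ℝ (Fin n) → ℝ)
    (β₁ β₂ : EuclideanSpace ℝ (Fin n)) : ℝ :=
  ω β₂ - ω β₁ - ⟪gradient ω β₁, β₂ - β₁⟫

theorem prox_step_inequality {n : ℕ}
    (B : Set (EuclideanSpace ℝ (Fin n))) (hBc : IsClosed B) (hBconv : Convex ℝ B)
    (ω : EuclideanSpace ℝ (Fin n) → ℝ) (hω : ContDiff ℝ 1 ω)
    (μω : ℝ) (hμ : 0 < μω) (hsc : StrongConvexOn Set.univ μω ω)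
    (β βplus g : EuclideanSpace ℝ (Fin n)) (η : ℝ) (hη : 0 < η)
    (hβ : β ∈ B) (hβplus : βplus ∈ B)
    (hmin : ∀ z ∈ B, η * ⟪g, βplus⟫ + bregman ω β βplus ≤ η * ⟪g, z⟫ + bregman ω β z) :
    ∀ u ∈ B, bregman ω βplus u ≤
      bregman ω β u + η * ⟪g, u - β⟫ + η ^ 2 / (2 * μω) * ‖g‖ ^ 2 := by
  intro u hu
  set dv := u - βplus with hdv
  -- first-order optimality at βplus
  have hgβ : HasGradientAt ω (gradient ω β) β := (hω.differentiable one_ne_zero β).hasGradientAt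
  have hgp : HasGradientAt ω (gradient ω βplus) βplus :=
    (hω.differentiable one_ne_zero βplus).hasGradientAt
  have h1 : HasDerivAt (fun t : ℝ => ω (βplus + t • dv)) ⟪gradient ω βplus, dv⟫ 0 :=
    hasDerivAt_line ω _ βplus dv hgp
  have h2 : HasDerivAt (fun t : ℝ => ⟪g, βplus + t • dv⟫) ⟪g, dv⟫ 0 := by
    have he : (fun t : ℝ => ⟪g, βplus + t • dv⟫) = fun t => ⟪g, dv⟫ * t + ⟪g, βplus⟫ := by
      funext t; rw [inner_add_right, real_inner_smul_right]; ring
    rw [he]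
    simpa using ((hasDerivAt_id (0:ℝ)).const_mul ⟪g, dv⟫).add_const ⟪g, βplus⟫
  have h3 : HasDerivAt (fun t : ℝ => ⟪gradient ω β, βplus + t • dv - β⟫)
      ⟪gradient ω β, dv⟫ 0 := by
    have he : (fun t : ℝ => ⟪gradient ω β, βplus + t • dv - β⟫)
        = fun t => ⟪gradient ω β, dv⟫ * t + ⟪gradient ω β, βplus - β⟫ := by
      funext t
      rw [show βplus + t • dv - β = t • dv + (βplus - β) by module, inner_add_right,
        real_inner_smul_right]
      ring
    rw [he]
    simpa using ((hasDerivAt_id (0:ℝ)).const_mul ⟪gradient ω β, dv⟫).add_const ⟪gradient ω β, βplus - β⟫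
  have hφ : HasDerivAt
      (fun t : ℝ => η * ⟪g, βplus + t • dv⟫ + bregman ω β (βplus + t • dv))
      (η * ⟪g, dv⟫ + (⟪gradient ω βplus, dv⟫ - ⟪gradient ω β, dv⟫)) 0 := by
    have := (h2.const_mul η).add ((h1.sub_const (ω β)).sub h3)
    exact this
  have hmem : ∀ t ∈ Set.Ioc (0:ℝ) 1, βplus + t • dv ∈ B := by
    intro t ht
    have := hBconv hβplus hu (by linarith [ht.2] : (0:ℝ) ≤ 1 - t) (le_of_lt ht.1) (by ring)
    rwa [show (1 - t) • βplus + t • u = βplus + t • dv by rw [hdv]; module] at this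
  have hopt : 0 ≤ η * ⟪g, dv⟫ + (⟪gradient ω βplus, dv⟫ - ⟪gradient ω β, dv⟫) := by
    have hneg := key_deriv_le (ψ := fun _ => (0:ℝ)) hφ.neg tendsto_const_nhds ?_
    · linarith
    · intro t ht
      have hmin' := hmin _ (hmem t ht)
      have h0 : βplus + (0:ℝ) • dv = βplus := by simp
      apply div_nonpos_of_nonpos_of_nonneg _ (le_of_lt ht.1)
      simp only [Pi.neg_apply, h0]
      linarith
  -- strong convexity at (β, βplus)
  have hstr := strong_grad_ineq hω hsc β βplus
  -- Fenchel / Cauchy-Schwarz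
  have hCS : ⟪g, β - βplus⟫ ≤ ‖g‖ * ‖β - βplus‖ := real_inner_le_norm g (β - βplus)
  have hnn : ‖β - βplus‖ = ‖βplus - β‖ := norm_sub_rev β βplus
  rw [hnn] at hCS
  have hAM : η * (‖g‖ * ‖βplus - β‖) ≤ η ^ 2 / (2 * μω) * ‖g‖ ^ 2 + μω / 2 * ‖βplus - β‖ ^ 2 := by
    have h := sq_nonneg (η * ‖g‖ - μω * ‖βplus - β‖)
    have hμ' : (0:ℝ) < 2 * μω := by linarith
    rw [← sub_nonneg]
    have key : η ^ 2 / (2 * μω) * ‖g‖ ^ 2 + μω / 2 * ‖βplus - β‖ ^ 2 - η * (‖g‖ * ‖βplus - β‖)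
        = (η * ‖g‖ - μω * ‖βplus - β‖) ^ 2 / (2 * μω) := by
      field_simp; ring
    rw [key]
    positivity
  -- combine
  simp only [bregman, inner_sub_right, hdv] at *
  nlinarith [mul_le_mul_of_nonneg_left hCS (le_of_lt hη)]
end

section
/- Let θ, δ > 0 and suppose a nonnegative sequence {v_t} satisfies v_{t+1} ≤ (1 - θη_t)v_t + δη_t² for all t ≥ 0, where η_t ∈ (0, 1/θ] is the self-tuned sequence with η_{t+1} = η_t(1 - (θ/2)η_t) and v₀ ≤ (2δ/θ)η₀. Then v_t ≤ (2δ/θ)η_t for all t ≥ 0, and hence v_t ≤ (4δ/θ²)(1/t) for all t ≥ 1. -/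
theorem recursive_inequality_rate (θ δ : ℝ) (hθ : 0 < θ) (hδ : 0 < δ)
    (η : ℕ → ℝ) (h0 : 0 < η 0) (h0' : η 0 ≤ 1 / θ)
    (hrec : ∀ t, η (t + 1) = η t * (1 - θ / 2 * η t))
    (v : ℕ → ℝ) (hv : ∀ t, 0 ≤ v t)
    (hv0 : v 0 ≤ 2 * δ / θ * η 0)
    (hvrec : ∀ t, v (t + 1) ≤ (1 - θ * η t) * v t + δ * (η t) ^ 2) :
    (∀ t, v t ≤ 2 * δ / θ * η t) ∧
      (∀ t : ℕ, 1 ≤ t → v t ≤ 4 * δ / θ ^ 2 * (1 / t)) := by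
  have hpos : ∀ t, 0 < η t ∧ η t ≤ 1 / θ := by
    intro t
    induction t with
    | zero => exact ⟨h0, h0'⟩
    | succ n ih =>
      obtain ⟨hp, hle⟩ := ih
      have hax : θ / 2 * η n ≤ 1 / 2 := by
        have h1 : θ / 2 * η n ≤ θ / 2 * (1 / θ) :=
          mul_le_mul_of_nonneg_left hle (by positivity)
        have h2 : θ / 2 * (1 / θ) = 1 / 2 := by field_simp
        linarith
      have hfac : (0:ℝ) < 1 - θ / 2 * η n := by linarith
      constructor
      · rw [hrec n]; exact mul_pos hp hfac
      · rw [hrec n]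
        have hax0 : 0 < θ / 2 * η n := by positivity
        nlinarith
  have hmain : ∀ t, v t ≤ 2 * δ / θ * η t := by
    intro t
    induction t with
    | zero => exact hv0
    | succ n ih =>
      obtain ⟨hp, hle⟩ := hpos n
      have hθη : θ * η n ≤ 1 := by
        have := mul_le_mul_of_nonneg_left hle (le_of_lt hθ)
        have h2 : θ * (1 / θ) = 1 := by field_simp
        linarith
      have h1 : v (n + 1) ≤ (1 - θ * η n) * v n + δ * η n ^ 2 := hvrec n
      have h2 : (1 - θ * η n) * v n ≤ (1 - θ * η n) * (2 * δ / θ * η n) :=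
        mul_le_mul_of_nonneg_left ih (by linarith)
      have heq : 2 * δ / θ * η (n + 1) =
          (1 - θ * η n) * (2 * δ / θ * η n) + δ * η n ^ 2 := by
        rw [hrec n]; field_simp; ring
      linarith
  have hrecip : ∀ t, 1 / η 0 + t * (θ / 2) ≤ 1 / η t := by
    intro t
    induction t with
    | zero => simp
    | succ n ih =>
      obtain ⟨hp, hle⟩ := hpos n
      have hax : θ / 2 * η n ≤ 1 / 2 := by
        have h1 : θ / 2 * η n ≤ θ / 2 * (1 / θ) :=
          mul_le_mul_of_nonneg_left hle (by positivity)
        have h2 : θ / 2 * (1 / θ) = 1 / 2 := by field_simp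
        linarith
      have hfac : (0:ℝ) < 1 - θ / 2 * η n := by linarith
      have hstep : 1 / η n + θ / 2 ≤ 1 / η (n + 1) := by
        rw [hrec n, le_div_iff₀ (by positivity)]
        have hinv : 1 / η n * η n = 1 := by field_simp
        have key : (1 / η n * η n) * (θ / 2 * η n) = θ / 2 * η n := by
          rw [hinv]; ring
        nlinarith [sq_nonneg (θ / 2 * η n)]
      push_cast
      linarith
  refine ⟨hmain, fun t ht => ?_⟩
  obtain ⟨hp, hle⟩ := hpos t
  have ht1 : (1:ℝ) ≤ (t:ℝ) := by exact_mod_cast ht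
  have h0inv : 0 < 1 / η 0 := by positivity
  have hr := hrecip t
  have h1 : η t * ((t : ℝ) * (θ / 2)) ≤ 1 := by
    calc η t * ((t : ℝ) * (θ / 2)) ≤ η t * (1 / η t) :=
          mul_le_mul_of_nonneg_left (by linarith) hp.le
      _ = 1 := by field_simp
  have hηt : η t ≤ 2 / (θ * t) := by
    rw [le_div_iff₀ (by positivity)]
    nlinarith
  have hvt := hmain t
  have hkey : 2 * δ / θ * (2 / (θ * t)) = 4 * δ / θ ^ 2 * (1 / t) := by
    field_simp; ring
  have : 2 * δ / θ * η t ≤ 2 * δ / θ * (2 / (θ * t)) :=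
    mul_le_mul_of_nonneg_left hηt (by positivity)
  linarith
end
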